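/- Let H be an n×n Hermitian matrix with real entries that is positive semidefinite, has nonpositive off-diagonal entries, and whose off-diagonal zero pattern is that of a connected graph G (H_{ik} < 0 iff i~k). If additionally for some nonempty set B of vertices there are weights b_i > 0 for i ∈ B, then any V ∈ ℂ^n with H V = 0 and Σ_{i∈B} b_i V_i = 0, where V can be chosen entrywise real nonnegative, must be the zero vector. -/
import Mathlib


open Matrix

/-- Abstraction of the key step of Theorem 3: a nonnegative kernel vector of a PSD matrix
with connected negative off-diagonal pattern which additionally satisfies a positive
linear constraint on a nonempty vertex set must vanish. -/
theorem stmt18 (n : ℕ) (G : SimpleGraph (Fin n)) [DecidableRel G.Adj]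
    (hconn : G.Connected)
    (H : Matrix (Fin n) (Fin n) ℝ) (hsymm : H.IsSymm) (hpsd : H.PosSemidef)
    (hpattern : ∀ i k, i ≠ k → (H i k < 0 ↔ G.Adj i k))
    (hoff : ∀ i k, i ≠ k → ¬ G.Adj i k → H i k = 0)
    (B : Finset (Fin n)) (hB : B.Nonempty)
    (b : Fin n → ℝ) (hb : ∀ i ∈ B, 0 < b i)
    (V : Fin n → ℝ) (hVpos : ∀ i, 0 ≤ V i)
    (hker : H.mulVec V = 0) (hconstraint : ∑ i ∈ B, b i * V i = 0) :
    V = 0 := by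
  -- Step 1: V vanishes on B
  have hBzero : ∀ i ∈ B, V i = 0 := by
    have h := (Finset.sum_eq_zero_iff_of_nonneg (fun i hi =>
      mul_nonneg (le_of_lt (hb i hi)) (hVpos i))).mp hconstraint
    intro i hi
    have := h i hi
    have hbi := hb i hi
    nlinarith
  -- Step 2: zero propagates along edges
  have step : ∀ j k : Fin n, G.Adj j k → V j = 0 → V k = 0 := by
    intro j k hadj hVj
    have hrow : ∑ x, H j x * V x = 0 := by
      have := congrFun hker j
      simpa [Matrix.mulVec, dotProduct] using this
    have hsplit : ∑ x ∈ Finset.univ.erase j, (-(H j x * V x)) = 0 := by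
      have : ∑ x ∈ Finset.univ.erase j, H j x * V x = 0 := by
        rw [Finset.sum_erase_eq_sub (Finset.mem_univ j), hrow, hVj]
        ring
      simpa [Finset.sum_neg_distrib] using congrArg Neg.neg this
    have hnonneg : ∀ x ∈ Finset.univ.erase j, 0 ≤ -(H j x * V x) := by
      intro x hx
      have hxj : x ≠ j := (Finset.mem_erase.mp hx).1
      have hHle : H j x ≤ 0 := by
        by_cases hadjx : G.Adj j x
        · exact le_of_lt ((hpattern j x (Ne.symm hxj)).mpr hadjx)
        · exact le_of_eq (hoff j x (Ne.symm hxj) hadjx)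
      have := mul_nonpos_of_nonpos_of_nonneg hHle (hVpos x)
      linarith
    have hall := (Finset.sum_eq_zero_iff_of_nonneg hnonneg).mp hsplit
    have hk : -(H j k * V k) = 0 := hall k (Finset.mem_erase.mpr ⟨(G.ne_of_adj hadj).symm, Finset.mem_univ k⟩)
    have hHk : H j k < 0 := (hpattern j k (G.ne_of_adj hadj)).mpr hadj
    have hVk := hVpos k
    nlinarith
  -- Step 3: connectivity
  obtain ⟨i0, hi0⟩ := hB
  have hwalk : ∀ (a c : Fin n) (w : G.Walk a c), V a = 0 → V c = 0 := by
    intro a c w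
    induction w with
    | nil => exact id
    | cons h p ih => intro ha; exact ih (step _ _ h ha)
  funext j
  obtain ⟨w⟩ := hconn.preconnected i0 j
  exact hwalk i0 j w (hBzero i0 hi0)
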